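/- Let 0 < a < b and let P₁, P₂ ∈ A with P₁ ≠ P₂ and polar coordinates P_i = (r_i cos θ_i, r_i sin θ_i), a < r_i < b. Suppose the two equations hold: (i) −B_0(P₁) + Σ_{m=1}^∞ (r₁^{2m} − (ab)^{2m} r₁^{−2m})/(b^{2m} − a^{2m}) = −((P₁ − P₂)·P₁)/|P₁ − P₂|² + B_0(P₂) − Σ_{m=1}^∞ (A_m(P₂) r₁^m − B_m(P₂) r₁^{−m}) cos m(θ₁ − θ₂); and (ii) −B_0(P₂) + Σ_{m=1}^∞ (r₂^{2m} − (ab)^{2m} r₂^{−2m})/(b^{2m} − a^{2m}) = −((P₂ − P₁)·P₂)/|P₂ − P₁|² + B_0(P₁) − Σ_{m=1}^∞ (A_m(P₁) r₂^m − B_m(P₁) r₂^{−m}) cos m(θ₁ − θ₂). Then r₁ = r₂. -/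

import Mathlib

/-- The coefficient `B_0(y)` of the Green function of the annulus `{a < |x| < b}`,
as a function of `s = |y|`. -/
noncomputable def B0 (a b s : ℝ) : ℝ := Real.log (s / b) / Real.log (a / b)

/-- The Fourier coefficient `A_m(y)`, as a function of `s = |y|`. -/
noncomputable def Acoef (a b s : ℝ) (m : ℕ) : ℝ :=
  (s ^ m - (a ^ 2 / s) ^ m) / (b ^ (2 * m) - a ^ (2 * m))

/-- The Fourier coefficient `B_m(y)`, as a function of `s = |y|`. -/
noncomputable def Bcoef (a b s : ℝ) (m : ℕ) : ℝ :=
  a ^ (2 * m) * ((b ^ 2 / s) ^ m - s ^ m) / (b ^ (2 * m) - a ^ (2 * m))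

private lemma sumGeom (x : ℝ) (h0 : 0 ≤ x) (h1 : x < 1) :
    Summable (fun m : ℕ => x ^ (m + 1)) := by
  simpa only [pow_succ] using (summable_geometric_of_lt_one h0 h1).mul_right x

private lemma summable_dom {f : ℕ → ℝ} (x y C : ℝ) (hx0 : 0 ≤ x) (hx : x < 1)
    (hy0 : 0 ≤ y) (hy : y < 1)
    (hf : ∀ m : ℕ, |f m| ≤ (x ^ (m + 1) + y ^ (m + 1)) * C) : Summable f := by
  have hg : Summable (fun m : ℕ => (x ^ (m + 1) + y ^ (m + 1)) * C) :=
    ((sumGeom x hx0 hx).add (sumGeom y hy0 hy)).mul_right C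
  exact Summable.of_norm (Summable.of_nonneg_of_le (fun n => norm_nonneg _)
    (fun n => by simpa [Real.norm_eq_abs] using hf n) hg)

private lemma denom_pos {a b : ℝ} (ha : 0 < a) (hab : a < b) (m : ℕ) :
    0 < b ^ (2 * (m + 1)) - a ^ (2 * (m + 1)) :=
  sub_pos.mpr (pow_lt_pow_left₀ hab ha.le (by omega))

private lemma denom_lb {a b : ℝ} (ha : 0 < a) (hab : a < b) (m : ℕ) :
    b ^ (2 * m) * (b ^ 2 - a ^ 2) ≤ b ^ (2 * (m + 1)) - a ^ (2 * (m + 1)) := by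
  have hb : (0 : ℝ) < b := ha.trans hab
  have h1 : a ^ (2 * m) ≤ b ^ (2 * m) := pow_le_pow_left₀ ha.le hab.le _
  have h2 : a ^ (2 * m) * a ^ 2 ≤ b ^ (2 * m) * a ^ 2 := by nlinarith [sq_nonneg a]
  have e1 : 2 * (m + 1) = 2 * m + 2 := by ring
  rw [e1, pow_add, pow_add]
  nlinarith [pow_pos hb (2 * m)]

private lemma summable_u (a b r : ℝ) (ha : 0 < a) (hab : a < b) (har : a < r) (hrb : r < b) :
    Summable (fun m : ℕ => (r ^ (2 * (m + 1)) - (a * b) ^ (2 * (m + 1)) * (r ^ (2 * (m + 1)))⁻¹) /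
      (b ^ (2 * (m + 1)) - a ^ (2 * (m + 1)))) := by
  have hb : (0 : ℝ) < b := ha.trans hab
  have hr : (0 : ℝ) < r := ha.trans har
  have hba : (0 : ℝ) < b ^ 2 - a ^ 2 := by nlinarith
  apply summable_dom (r ^ 2 / b ^ 2) (a ^ 2 / r ^ 2) (b ^ 2 / (b ^ 2 - a ^ 2))
  · positivity
  · rw [div_lt_one (by positivity)]; nlinarith
  · positivity
  · rw [div_lt_one (by positivity)]; nlinarith
  · intro m
    have hdp := denom_pos ha hab m
    have hlb := denom_lb ha hab m
    have h0r : (0 : ℝ) ≤ r ^ (2 * (m + 1)) := by positivity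
    have h0i : (0 : ℝ) ≤ (a * b) ^ (2 * (m + 1)) * (r ^ (2 * (m + 1)))⁻¹ := by positivity
    calc |(r ^ (2 * (m + 1)) - (a * b) ^ (2 * (m + 1)) * (r ^ (2 * (m + 1)))⁻¹) /
          (b ^ (2 * (m + 1)) - a ^ (2 * (m + 1)))|
        = |r ^ (2 * (m + 1)) - (a * b) ^ (2 * (m + 1)) * (r ^ (2 * (m + 1)))⁻¹| /
          (b ^ (2 * (m + 1)) - a ^ (2 * (m + 1))) := by rw [abs_div, abs_of_pos hdp]
      _ ≤ (r ^ (2 * (m + 1)) + (a * b) ^ (2 * (m + 1)) * (r ^ (2 * (m + 1)))⁻¹) /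
          (b ^ (2 * m) * (b ^ 2 - a ^ 2)) := by
          apply div_le_div₀ (by positivity)
            (abs_sub_le_iff.mpr ⟨by linarith, by linarith⟩) (by positivity) hlb
      _ = ((r ^ 2 / b ^ 2) ^ (m + 1) + (a ^ 2 / r ^ 2) ^ (m + 1)) * (b ^ 2 / (b ^ 2 - a ^ 2)) := by
          have e : ∀ t : ℝ, t ^ (2 * (m + 1)) = (t ^ (m + 1)) ^ 2 := fun t => by ring
          have e2 : ∀ t : ℝ, (t ^ 2) ^ (m + 1) = (t ^ (m + 1)) ^ 2 := fun t => by ring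
          have e3 : b ^ (2 * m) = (b ^ (m + 1)) ^ 2 / b ^ 2 := by field_simp; ring
          have hx : r ^ (m + 1) ≠ 0 := by positivity
          have hy : b ^ (m + 1) ≠ 0 := by positivity
          have hd : b ^ 2 - a ^ 2 ≠ 0 := hba.ne'
          simp only [e, e2, e3, div_pow, mul_pow]
          generalize r ^ (m + 1) = x at hx ⊢
          generalize b ^ (m + 1) = y at hy ⊢
          field_simp

private lemma summable_v (a b r s θ : ℝ) (ha : 0 < a) (hab : a < b) (har : a < r) (hrb : r < b)
    (has : a < s) (hsb : s < b) :
    Summable (fun m : ℕ => (Acoef a b s (m + 1) * r ^ (m + 1) -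
      Bcoef a b s (m + 1) * (r ^ (m + 1))⁻¹) * Real.cos ((m + 1) * θ)) := by
  have hb : (0 : ℝ) < b := ha.trans hab
  have hr : (0 : ℝ) < r := ha.trans har
  have hs : (0 : ℝ) < s := ha.trans has
  have hba : (0 : ℝ) < b ^ 2 - a ^ 2 := by nlinarith
  apply summable_dom (r * s / b ^ 2) (a ^ 2 / (r * s)) (b ^ 2 / (b ^ 2 - a ^ 2))
  · positivity
  · rw [div_lt_one (by positivity)]; nlinarith
  · positivity
  · rw [div_lt_one (by positivity)]; nlinarith
  · intro m
    have hdp := denom_pos ha hab m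
    have hlb := denom_lb ha hab m
    have hs1 : (a ^ 2 / s) ^ (m + 1) ≤ s ^ (m + 1) :=
      pow_le_pow_left₀ (by positivity) (by rw [div_le_iff₀ hs]; nlinarith) _
    have hs2 : s ^ (m + 1) ≤ (b ^ 2 / s) ^ (m + 1) :=
      pow_le_pow_left₀ (by positivity) (by rw [le_div_iff₀ hs]; nlinarith) _
    have e_body : Acoef a b s (m + 1) * r ^ (m + 1) - Bcoef a b s (m + 1) * (r ^ (m + 1))⁻¹
        = ((s ^ (m + 1) - (a ^ 2 / s) ^ (m + 1)) * r ^ (m + 1) -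
          a ^ (2 * (m + 1)) * ((b ^ 2 / s) ^ (m + 1) - s ^ (m + 1)) * (r ^ (m + 1))⁻¹) /
          (b ^ (2 * (m + 1)) - a ^ (2 * (m + 1))) := by
      simp only [Acoef, Bcoef]; ring
    have m1 : (a ^ 2 / s) ^ (m + 1) * r ^ (m + 1) ≤ s ^ (m + 1) * r ^ (m + 1) := by
      have : (0:ℝ) ≤ r ^ (m+1) := by positivity
      exact mul_le_mul_of_nonneg_right hs1 this
    have m2 : a ^ (2 * (m + 1)) * s ^ (m + 1) * (r ^ (m + 1))⁻¹ ≤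
        a ^ (2 * (m + 1)) * (b ^ 2 / s) ^ (m + 1) * (r ^ (m + 1))⁻¹ := by
      have h1 : (0:ℝ) ≤ a ^ (2 * (m + 1)) := by positivity
      have h2 : (0:ℝ) ≤ (r ^ (m + 1))⁻¹ := by positivity
      exact mul_le_mul_of_nonneg_right (mul_le_mul_of_nonneg_left hs2 h1) h2
    have n1 : (0:ℝ) ≤ (a ^ 2 / s) ^ (m + 1) * r ^ (m + 1) := by positivity
    have n2 : (0:ℝ) ≤ a ^ (2 * (m + 1)) * s ^ (m + 1) * (r ^ (m + 1))⁻¹ := by positivity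
    have habs : |(s ^ (m + 1) - (a ^ 2 / s) ^ (m + 1)) * r ^ (m + 1) -
          a ^ (2 * (m + 1)) * ((b ^ 2 / s) ^ (m + 1) - s ^ (m + 1)) * (r ^ (m + 1))⁻¹| ≤
        s ^ (m + 1) * r ^ (m + 1) + a ^ (2 * (m + 1)) * (b ^ 2 / s) ^ (m + 1) * (r ^ (m + 1))⁻¹ :=
      abs_sub_le_iff.mpr ⟨by nlinarith, by nlinarith⟩
    calc |(Acoef a b s (m + 1) * r ^ (m + 1) - Bcoef a b s (m + 1) * (r ^ (m + 1))⁻¹) *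
          Real.cos ((m + 1) * θ)|
        ≤ |Acoef a b s (m + 1) * r ^ (m + 1) - Bcoef a b s (m + 1) * (r ^ (m + 1))⁻¹| := by
          rw [abs_mul]
          exact mul_le_of_le_one_right (abs_nonneg _) (Real.abs_cos_le_one _)
      _ = |(s ^ (m + 1) - (a ^ 2 / s) ^ (m + 1)) * r ^ (m + 1) -
            a ^ (2 * (m + 1)) * ((b ^ 2 / s) ^ (m + 1) - s ^ (m + 1)) * (r ^ (m + 1))⁻¹| /
            (b ^ (2 * (m + 1)) - a ^ (2 * (m + 1))) := by rw [e_body, abs_div, abs_of_pos hdp]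
      _ ≤ (s ^ (m + 1) * r ^ (m + 1) + a ^ (2 * (m + 1)) * (b ^ 2 / s) ^ (m + 1) * (r ^ (m + 1))⁻¹) /
            (b ^ (2 * m) * (b ^ 2 - a ^ 2)) := by
          apply div_le_div₀ (by positivity) habs (by positivity) hlb
      _ = ((r * s / b ^ 2) ^ (m + 1) + (a ^ 2 / (r * s)) ^ (m + 1)) * (b ^ 2 / (b ^ 2 - a ^ 2)) := by
          have e : ∀ t : ℝ, t ^ (2 * (m + 1)) = (t ^ (m + 1)) ^ 2 := fun t => by ring
          have e2 : ∀ t : ℝ, (t ^ 2) ^ (m + 1) = (t ^ (m + 1)) ^ 2 := fun t => by ring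
          have e3 : b ^ (2 * m) = (b ^ (m + 1)) ^ 2 / b ^ 2 := by field_simp; ring
          have hx : r ^ (m + 1) ≠ 0 := by positivity
          have hz : s ^ (m + 1) ≠ 0 := by positivity
          have hy : b ^ (m + 1) ≠ 0 := by positivity
          have hd : b ^ 2 - a ^ 2 ≠ 0 := hba.ne'
          simp only [e, e2, e3, div_pow, mul_pow]
          generalize r ^ (m + 1) = x at hx ⊢
          generalize s ^ (m + 1) = z at hz ⊢
          generalize b ^ (m + 1) = y at hy ⊢
          field_simp

set_option maxHeartbeats 1000000 in
/-- Let `0 < a < b` and let `P₁ ≠ P₂` be points of the annulus `{a < |x| < b}` with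
polar coordinates `Pᵢ = (rᵢ cos θᵢ, rᵢ sin θᵢ)`.  If the two characterization equations
`(1/2)∇R_A(Pᵢ)·Pᵢ = ∇ₓG_A(Pᵢ, Pⱼ)·Pᵢ` (written out via Hickey's formula) hold, then
`r₁ = r₂`. -/
theorem equal_radii_of_blowup_equations (a b : ℝ) (ha : 0 < a) (hab : a < b)
    (P₁ P₂ : EuclideanSpace ℝ (Fin 2)) (r₁ r₂ θ₁ θ₂ : ℝ)
    (hr₁ : r₁ ∈ Set.Ioo a b) (hr₂ : r₂ ∈ Set.Ioo a b)
    (hp₁ : P₁ = ![r₁ * Real.cos θ₁, r₁ * Real.sin θ₁])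
    (hp₂ : P₂ = ![r₂ * Real.cos θ₂, r₂ * Real.sin θ₂])
    (hne : P₁ ≠ P₂)
    (heq₁ : -B0 a b r₁ +
        ∑' m : ℕ, (r₁ ^ (2 * (m + 1)) - (a * b) ^ (2 * (m + 1)) * (r₁ ^ (2 * (m + 1)))⁻¹) /
          (b ^ (2 * (m + 1)) - a ^ (2 * (m + 1))) =
      -(inner ℝ (P₁ - P₂) P₁ : ℝ) / ‖P₁ - P₂‖ ^ 2 + B0 a b r₂ -
        ∑' m : ℕ, (Acoef a b r₂ (m + 1) * r₁ ^ (m + 1) -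
            Bcoef a b r₂ (m + 1) * (r₁ ^ (m + 1))⁻¹) * Real.cos ((m + 1) * (θ₁ - θ₂)))
    (heq₂ : -B0 a b r₂ +
        ∑' m : ℕ, (r₂ ^ (2 * (m + 1)) - (a * b) ^ (2 * (m + 1)) * (r₂ ^ (2 * (m + 1)))⁻¹) /
          (b ^ (2 * (m + 1)) - a ^ (2 * (m + 1))) =
      -(inner ℝ (P₂ - P₁) P₂ : ℝ) / ‖P₂ - P₁‖ ^ 2 + B0 a b r₁ -
        ∑' m : ℕ, (Acoef a b r₁ (m + 1) * r₂ ^ (m + 1) -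
            Bcoef a b r₁ (m + 1) * (r₂ ^ (m + 1))⁻¹) * Real.cos ((m + 1) * (θ₁ - θ₂))) :
    r₁ = r₂ := by
  obtain ⟨har₁, hr₁b⟩ := hr₁
  obtain ⟨har₂, hr₂b⟩ := hr₂
  have hb : (0 : ℝ) < b := ha.trans hab
  have hr₁0 : (0 : ℝ) < r₁ := ha.trans har₁
  have hr₂0 : (0 : ℝ) < r₂ := ha.trans har₂
  -- geometry
  have hi₁ : (inner ℝ (P₁ - P₂) P₁ : ℝ) = r₁ ^ 2 - r₁ * r₂ * Real.cos (θ₁ - θ₂) := by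
    simp only [PiLp.inner_apply, Fin.sum_univ_two, RCLike.inner_apply, conj_trivial,
      PiLp.sub_apply, hp₁, hp₂, Matrix.cons_val_zero, Matrix.cons_val_one, Matrix.head_cons]
    rw [Real.cos_sub]
    linear_combination r₁ ^ 2 * Real.sin_sq_add_cos_sq θ₁
  have hi₂ : (inner ℝ (P₂ - P₁) P₂ : ℝ) = r₂ ^ 2 - r₁ * r₂ * Real.cos (θ₁ - θ₂) := by
    simp only [PiLp.inner_apply, Fin.sum_univ_two, RCLike.inner_apply, conj_trivial,
      PiLp.sub_apply, hp₁, hp₂, Matrix.cons_val_zero, Matrix.cons_val_one, Matrix.head_cons]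
    rw [Real.cos_sub]
    linear_combination r₂ ^ 2 * Real.sin_sq_add_cos_sq θ₂
  have hD : ‖P₁ - P₂‖ ^ 2 = r₁ ^ 2 + r₂ ^ 2 - 2 * (r₁ * r₂ * Real.cos (θ₁ - θ₂)) := by
    rw [← real_inner_self_eq_norm_sq]
    simp only [PiLp.inner_apply, Fin.sum_univ_two, RCLike.inner_apply, conj_trivial,
      PiLp.sub_apply, hp₁, hp₂, Matrix.cons_val_zero, Matrix.cons_val_one, Matrix.head_cons]
    rw [Real.cos_sub]
    linear_combination r₁ ^ 2 * Real.sin_sq_add_cos_sq θ₁ + r₂ ^ 2 * Real.sin_sq_add_cos_sq θ₂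
  have hDpos : (0 : ℝ) < r₁ ^ 2 + r₂ ^ 2 - 2 * (r₁ * r₂ * Real.cos (θ₁ - θ₂)) := by
    have h1 : (0 : ℝ) < ‖P₁ - P₂‖ := norm_sub_pos_iff.mpr hne
    have h2 : (0 : ℝ) < ‖P₁ - P₂‖ ^ 2 := by positivity
    rwa [hD] at h2
  rw [hi₁, hD] at heq₁
  rw [norm_sub_rev, hi₂, hD] at heq₂
  -- summability
  have hu₁ := summable_u a b r₁ ha hab har₁ hr₁b
  have hu₂ := summable_u a b r₂ ha hab har₂ hr₂b
  have hv₁ := summable_v a b r₁ r₂ (θ₁ - θ₂) ha hab har₁ hr₁b har₂ hr₂b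
  have hv₂ := summable_v a b r₂ r₁ (θ₁ - θ₂) ha hab har₂ hr₂b har₁ hr₁b
  -- the combined series
  have hterm : ∀ m : ℕ,
      ((r₁ ^ (2 * (m + 1)) - (a * b) ^ (2 * (m + 1)) * (r₁ ^ (2 * (m + 1)))⁻¹) /
          (b ^ (2 * (m + 1)) - a ^ (2 * (m + 1))) -
        (r₂ ^ (2 * (m + 1)) - (a * b) ^ (2 * (m + 1)) * (r₂ ^ (2 * (m + 1)))⁻¹) /
          (b ^ (2 * (m + 1)) - a ^ (2 * (m + 1)))) +
      ((Acoef a b r₂ (m + 1) * r₁ ^ (m + 1) - Bcoef a b r₂ (m + 1) * (r₁ ^ (m + 1))⁻¹) *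
          Real.cos ((m + 1) * (θ₁ - θ₂)) -
        (Acoef a b r₁ (m + 1) * r₂ ^ (m + 1) - Bcoef a b r₁ (m + 1) * (r₂ ^ (m + 1))⁻¹) *
          Real.cos ((m + 1) * (θ₁ - θ₂)))
      = (r₁ ^ (2 * (m + 1)) - r₂ ^ (2 * (m + 1))) *
          ((r₁ * r₂) ^ (2 * (m + 1)) + (a * b) ^ (2 * (m + 1)) -
            2 * a ^ (2 * (m + 1)) * (r₁ * r₂) ^ (m + 1) * Real.cos ((m + 1) * (θ₁ - θ₂))) /
          ((r₁ * r₂) ^ (2 * (m + 1)) * (b ^ (2 * (m + 1)) - a ^ (2 * (m + 1)))) := by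
    intro m
    have h1 : r₁ ≠ 0 := hr₁0.ne'
    have h2 : r₂ ≠ 0 := hr₂0.ne'
    have hden : b ^ (2 * (m + 1)) - a ^ (2 * (m + 1)) ≠ 0 := (denom_pos ha hab m).ne'
    have e : ∀ t : ℝ, t ^ (2 * (m + 1)) = (t ^ (m + 1)) ^ 2 := fun t => by ring
    have e2 : ∀ t : ℝ, (t ^ 2) ^ (m + 1) = (t ^ (m + 1)) ^ 2 := fun t => by ring
    have hx : r₁ ^ (m + 1) ≠ 0 := by positivity
    have hy : r₂ ^ (m + 1) ≠ 0 := by positivity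
    simp only [Acoef, Bcoef, e, e2, div_pow, mul_pow] at hden ⊢
    generalize r₁ ^ (m + 1) = x at hx ⊢
    generalize r₂ ^ (m + 1) = y at hy ⊢
    field_simp
    ring
  have key : (∑' m : ℕ, (r₁ ^ (2 * (m + 1)) - r₂ ^ (2 * (m + 1))) *
          ((r₁ * r₂) ^ (2 * (m + 1)) + (a * b) ^ (2 * (m + 1)) -
            2 * a ^ (2 * (m + 1)) * (r₁ * r₂) ^ (m + 1) * Real.cos ((m + 1) * (θ₁ - θ₂))) /
          ((r₁ * r₂) ^ (2 * (m + 1)) * (b ^ (2 * (m + 1)) - a ^ (2 * (m + 1)))))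
      = (r₂ ^ 2 - r₁ ^ 2) / (r₁ ^ 2 + r₂ ^ 2 - 2 * (r₁ * r₂ * Real.cos (θ₁ - θ₂))) := by
    have e1 : (∑' m : ℕ, (r₁ ^ (2 * (m + 1)) - r₂ ^ (2 * (m + 1))) *
          ((r₁ * r₂) ^ (2 * (m + 1)) + (a * b) ^ (2 * (m + 1)) -
            2 * a ^ (2 * (m + 1)) * (r₁ * r₂) ^ (m + 1) * Real.cos ((m + 1) * (θ₁ - θ₂))) /
          ((r₁ * r₂) ^ (2 * (m + 1)) * (b ^ (2 * (m + 1)) - a ^ (2 * (m + 1)))))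
        = ∑' m : ℕ,
          (((r₁ ^ (2 * (m + 1)) - (a * b) ^ (2 * (m + 1)) * (r₁ ^ (2 * (m + 1)))⁻¹) /
              (b ^ (2 * (m + 1)) - a ^ (2 * (m + 1))) -
            (r₂ ^ (2 * (m + 1)) - (a * b) ^ (2 * (m + 1)) * (r₂ ^ (2 * (m + 1)))⁻¹) /
              (b ^ (2 * (m + 1)) - a ^ (2 * (m + 1)))) +
          ((Acoef a b r₂ (m + 1) * r₁ ^ (m + 1) - Bcoef a b r₂ (m + 1) * (r₁ ^ (m + 1))⁻¹) *
              Real.cos ((m + 1) * (θ₁ - θ₂)) -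
            (Acoef a b r₁ (m + 1) * r₂ ^ (m + 1) - Bcoef a b r₁ (m + 1) * (r₂ ^ (m + 1))⁻¹) *
              Real.cos ((m + 1) * (θ₁ - θ₂)))) :=
      tsum_congr (fun m => (hterm m).symm)
    rw [e1, Summable.tsum_add (hu₁.sub hu₂) (hv₁.sub hv₂), Summable.tsum_sub hu₁ hu₂, Summable.tsum_sub hv₁ hv₂]
    linear_combination heq₁ - heq₂
  -- signs
  have hfac : ∀ m : ℕ, 0 < (r₁ * r₂) ^ (2 * (m + 1)) + (a * b) ^ (2 * (m + 1)) -
      2 * a ^ (2 * (m + 1)) * (r₁ * r₂) ^ (m + 1) * Real.cos ((m + 1) * (θ₁ - θ₂)) := by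
    intro m
    have e1 : (r₁ * r₂) ^ (2 * (m + 1)) = ((r₁ * r₂) ^ (m + 1)) ^ 2 := by
      rw [mul_comm 2 (m + 1), pow_mul]
    have e2 : (a * b) ^ (2 * (m + 1)) = (a ^ (m + 1) * b ^ (m + 1)) ^ 2 := by
      rw [mul_comm 2 (m + 1), pow_mul, mul_pow]
    have e3 : a ^ (2 * (m + 1)) = (a ^ (m + 1)) ^ 2 := by rw [mul_comm 2 (m + 1), pow_mul]
    rw [e1, e2, e3]
    have hW : (0 : ℝ) < (r₁ * r₂) ^ (m + 1) := by positivity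
    have hA : (0 : ℝ) < a ^ (m + 1) := by positivity
    have hAB : a ^ (m + 1) < b ^ (m + 1) := pow_lt_pow_left₀ hab ha.le (by omega)
    have hc : Real.cos ((m + 1) * (θ₁ - θ₂)) ≤ 1 := Real.cos_le_one _
    have hsq : (a ^ (m + 1)) ^ 2 < (b ^ (m + 1)) ^ 2 := by nlinarith
    nlinarith [sq_nonneg ((r₁ * r₂) ^ (m + 1) - (a ^ (m + 1)) ^ 2),
      mul_pos (mul_pos hA hA) (sub_pos.mpr hsq),
      mul_nonneg (mul_nonneg (by positivity : (0:ℝ) ≤ 2 * (a ^ (m + 1)) ^ 2) hW.le)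
        (sub_nonneg.mpr hc)]
  have hdenm : ∀ m : ℕ, 0 < (r₁ * r₂) ^ (2 * (m + 1)) * (b ^ (2 * (m + 1)) - a ^ (2 * (m + 1))) :=
    fun m => mul_pos (by positivity) (denom_pos ha hab m)
  have hTsum : Summable (fun m : ℕ => (r₁ ^ (2 * (m + 1)) - r₂ ^ (2 * (m + 1))) *
          ((r₁ * r₂) ^ (2 * (m + 1)) + (a * b) ^ (2 * (m + 1)) -
            2 * a ^ (2 * (m + 1)) * (r₁ * r₂) ^ (m + 1) * Real.cos ((m + 1) * (θ₁ - θ₂))) /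
          ((r₁ * r₂) ^ (2 * (m + 1)) * (b ^ (2 * (m + 1)) - a ^ (2 * (m + 1))))) :=
    ((hu₁.sub hu₂).add (hv₁.sub hv₂)).congr hterm
  rcases lt_trichotomy r₁ r₂ with h | h | h
  · exfalso
    have hT : ∀ m : ℕ, (r₁ ^ (2 * (m + 1)) - r₂ ^ (2 * (m + 1))) *
          ((r₁ * r₂) ^ (2 * (m + 1)) + (a * b) ^ (2 * (m + 1)) -
            2 * a ^ (2 * (m + 1)) * (r₁ * r₂) ^ (m + 1) * Real.cos ((m + 1) * (θ₁ - θ₂))) /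
          ((r₁ * r₂) ^ (2 * (m + 1)) * (b ^ (2 * (m + 1)) - a ^ (2 * (m + 1)))) < 0 := by
      intro m
      have h1 : r₁ ^ (2 * (m + 1)) - r₂ ^ (2 * (m + 1)) < 0 :=
        sub_neg.mpr (pow_lt_pow_left₀ h hr₁0.le (by omega))
      exact div_neg_of_neg_of_pos (mul_neg_of_neg_of_pos h1 (hfac m)) (hdenm m)
    have hpos : 0 < ∑' m : ℕ, -((r₁ ^ (2 * (m + 1)) - r₂ ^ (2 * (m + 1))) *
          ((r₁ * r₂) ^ (2 * (m + 1)) + (a * b) ^ (2 * (m + 1)) -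
            2 * a ^ (2 * (m + 1)) * (r₁ * r₂) ^ (m + 1) * Real.cos ((m + 1) * (θ₁ - θ₂))) /
          ((r₁ * r₂) ^ (2 * (m + 1)) * (b ^ (2 * (m + 1)) - a ^ (2 * (m + 1))))) :=
      Summable.tsum_pos hTsum.neg (fun m => (neg_pos.mpr (hT m)).le) 0 (neg_pos.mpr (hT 0))
    rw [tsum_neg, key] at hpos
    have hrhs : 0 < (r₂ ^ 2 - r₁ ^ 2) / (r₁ ^ 2 + r₂ ^ 2 - 2 * (r₁ * r₂ * Real.cos (θ₁ - θ₂))) :=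
      div_pos (by nlinarith) hDpos
    linarith
  · exact h
  · exfalso
    have hT : ∀ m : ℕ, 0 < (r₁ ^ (2 * (m + 1)) - r₂ ^ (2 * (m + 1))) *
          ((r₁ * r₂) ^ (2 * (m + 1)) + (a * b) ^ (2 * (m + 1)) -
            2 * a ^ (2 * (m + 1)) * (r₁ * r₂) ^ (m + 1) * Real.cos ((m + 1) * (θ₁ - θ₂))) /
          ((r₁ * r₂) ^ (2 * (m + 1)) * (b ^ (2 * (m + 1)) - a ^ (2 * (m + 1)))) := by
      intro m
      have h1 : 0 < r₁ ^ (2 * (m + 1)) - r₂ ^ (2 * (m + 1)) :=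
        sub_pos.mpr (pow_lt_pow_left₀ h hr₂0.le (by omega))
      exact div_pos (mul_pos h1 (hfac m)) (hdenm m)
    have hpos := Summable.tsum_pos hTsum (fun m => (hT m).le) 0 (hT 0)
    rw [key] at hpos
    have hrhs : (r₂ ^ 2 - r₁ ^ 2) / (r₁ ^ 2 + r₂ ^ 2 - 2 * (r₁ * r₂ * Real.cos (θ₁ - θ₂))) < 0 :=
      div_neg_of_neg_of_pos (by nlinarith) hDpos
    linarith
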